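/- Let $(\Omega,\mathscr F,\mathbb P,(\mathscr F_j)_{j=0}^\infty)$ be a filtered probability space and $(\xi_j)_{j=1}^\infty$ an adapted sequence of real random variables such that $\xi_j$ is independent of $\mathscr F_{j-1}$, $\mathsf E\xi_j=0$ and $\mathsf E\xi_j^2=\sigma_j^2\in(0,\infty)$; set $s_n^2=\sum_{j=1}^n\sigma_j^2$. Assume the Lindeberg condition, $\overline\lambda_j\le\Lambda$, and the stabilization condition $M_n\to 0$ with limits $\overline\lambda\ge\underline\lambda\ge 0$. Let $v:[0,1]\times\mathbb R\to\mathbb R$ have continuous partial derivatives $v_t$ and $v_{xx}$ with $v_{xx}$ bounded, and satisfy $v_t+\tfrac12(\overline\lambda^2 v_{xx}^+-\underline\lambda^2 v_{xx}^-)=0$ on $[0,1)\times\mathbb R$. For $\lambda_0^{n-1}\in\mathfrak A^{n-1}$ put $t_j=s_j^2/s_n^2$ (with $t_0=0$), $X_j=\frac{1}{s_n}\sum_{k=0}^{j-1}\lambda_k\xi_{k+1}$, and $J_n=\mathsf E\sum_{j=0}^{n-1}\frac{\sigma_{j+1}^2}{s_n^2}\big(v_t(t_j,X_j)+\tfrac{\lambda_j^2}{2}v_{xx}(t_j,X_j)\big)$.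 Then $\lim_{n\to\infty}\sup_{\lambda_0^{n-1}\in\mathfrak A^{n-1}}J_n=0$. -/
import Mathlib

open MeasureTheory ProbabilityTheory Filter

private lemma key_lb {w A l0 l1 la lb C : ℝ}
    (hw : w + (1/2) * (lb^2 * max A 0 - la^2 * max (-A) 0) = 0)
    (hA : |A| ≤ C) :
    -((|l1^2 - lb^2| + |l0^2 - la^2|) * (C/2))
      ≤ w + (if 0 ≤ A then l1 else l0)^2/2 * A := by
  have hC : (0:ℝ) ≤ C := le_trans (abs_nonneg A) hA
  by_cases h : 0 ≤ A
  · rw [if_pos h]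
    rw [max_eq_left h, max_eq_right (neg_nonpos.mpr h)] at hw
    have hb : |(l1^2 - lb^2) * A| ≤ |l1^2 - lb^2| * C := by
      rw [abs_mul]; exact mul_le_mul_of_nonneg_left hA (abs_nonneg _)
    have hy : 0 ≤ |l0^2 - la^2| * C := mul_nonneg (abs_nonneg _) hC
    have := neg_abs_le ((l1^2 - lb^2) * A)
    nlinarith
  · push_neg at h
    rw [if_neg (not_le.mpr h)]
    rw [max_eq_right h.le, max_eq_left (neg_nonneg.mpr h.le)] at hw
    have hb : |(l0^2 - la^2) * A| ≤ |l0^2 - la^2| * C := by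
      rw [abs_mul]; exact mul_le_mul_of_nonneg_left hA (abs_nonneg _)
    have hy : 0 ≤ |l1^2 - lb^2| * C := mul_nonneg (abs_nonneg _) hC
    have := neg_abs_le ((l0^2 - la^2) * A)
    nlinarith

private lemma key_ub {w A lam l0 l1 la lb C : ℝ}
    (hw : w + (1/2) * (lb^2 * max A 0 - la^2 * max (-A) 0) = 0)
    (hA : |A| ≤ C) (h0 : 0 ≤ l0) (hl : l0 ≤ lam) (hr : lam ≤ l1) :
    w + lam^2/2 * A ≤ (|l1^2 - lb^2| + |l0^2 - la^2|) * (C/2) := by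
  have hPN : max A 0 - max (-A) 0 = A := by
    rcases le_total 0 A with h | h
    · rw [max_eq_left h, max_eq_right (neg_nonpos.mpr h)]; ring
    · rw [max_eq_right h, max_eq_left (neg_nonneg.mpr h)]; ring
  have hPC : max A 0 ≤ C := max_le (le_trans (le_abs_self A) hA)
    (le_trans (abs_nonneg A) hA)
  have hNC : max (-A) 0 ≤ C := max_le (le_trans (le_abs_self (-A)) (by rwa [abs_neg]))
    (le_trans (abs_nonneg A) hA)
  have hlam2 : lam^2 ≤ l1^2 := pow_le_pow_left₀ (le_trans h0 hl) hr 2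
  have hlam0 : l0^2 ≤ lam^2 := pow_le_pow_left₀ h0 hl 2
  have h1' : lam^2 - lb^2 ≤ |l1^2 - lb^2| := by linarith [le_abs_self (l1^2 - lb^2)]
  have h2' : la^2 - lam^2 ≤ |l0^2 - la^2| := by
    rw [abs_sub_comm]; linarith [le_abs_self (la^2 - l0^2)]
  have hb1 : (lam^2 - lb^2) * max A 0 ≤ |l1^2 - lb^2| * C :=
    mul_le_mul h1' hPC (le_max_right A 0) (abs_nonneg _)
  have hb2 : (la^2 - lam^2) * max (-A) 0 ≤ |l0^2 - la^2| * C :=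
    mul_le_mul h2' hNC (le_max_right (-A) 0) (abs_nonneg _)
  have key : -((1/2) * (lb^2 * max A 0 - la^2 * max (-A) 0))
      + lam^2/2 * (max A 0 - max (-A) 0)
      ≤ (|l1^2 - lb^2| + |l0^2 - la^2|) * (C/2) := by nlinarith [hb1, hb2]
  rw [hPN] at key
  linarith

private noncomputable def XXr {Ω : Type*} (ξ : ℕ → Ω → ℝ) (c : ℝ)
    (pick : ℕ → ℝ → ℝ) : ℕ → Ω → ℝ
  | 0 => fun _ => 0
  | (j+1) => fun ω => XXr ξ c pick j ω + c * pick j (XXr ξ c pick j ω) * ξ (j+1) ω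

private lemma XXr_eq {Ω : Type*} (ξ : ℕ → Ω → ℝ) (c : ℝ) (pick : ℕ → ℝ → ℝ)
    (j : ℕ) (ω : Ω) :
    XXr ξ c pick j ω
      = c * ∑ k ∈ Finset.range j, pick k (XXr ξ c pick k ω) * ξ (k+1) ω := by
  induction j with
  | zero => simp [XXr]
  | succ j ih =>
    rw [Finset.sum_range_succ, mul_add, ← ih]
    show XXr ξ c pick j ω + c * pick j (XXr ξ c pick j ω) * ξ (j+1) ω = _
    ring

/-- If `v` solves `v_t + ½(λ̄² v_xx⁺ - λ̲² v_xx⁻) = 0` on `[0,1) × ℝ`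
with continuous `v_t`, `v_xx` and bounded `v_xx`, then under the Lindeberg,
boundedness and stabilization conditions the quantity
`Jₙ = E ∑ⱼ (σⱼ₊₁²/sₙ²)(v_t(tⱼ, Xⱼ) + (λⱼ²/2) v_xx(tⱼ, Xⱼ))` satisfies
`limₙ sup_{λ ∈ 𝔄ⁿ⁻¹} Jₙ = 0`. -/
theorem stmt_8 {Ω : Type*} {mΩ : MeasurableSpace Ω} (P : Measure Ω) [IsProbabilityMeasure P]
    (F : Filtration ℕ mΩ) (ξ : ℕ → Ω → ℝ) (σ s : ℕ → ℝ)
    (hadapt : ∀ j, 1 ≤ j → Measurable[F j] (ξ j))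
    (hindep : ∀ j, 1 ≤ j →
      Indep (MeasurableSpace.comap (ξ j) inferInstance) (F (j - 1)) P)
    (hσ : ∀ j, 0 < σ j)
    (hint1 : ∀ j, 1 ≤ j → Integrable (ξ j) P)
    (hmean : ∀ j, 1 ≤ j → (∫ ω, ξ j ω ∂P) = 0)
    (hint2 : ∀ j, 1 ≤ j → Integrable (fun ω => ξ j ω ^ 2) P)
    (hvar : ∀ j, 1 ≤ j → (∫ ω, ξ j ω ^ 2 ∂P) = σ j ^ 2)
    (hs : ∀ n, s n = Real.sqrt (∑ j ∈ Finset.range n, σ (j + 1) ^ 2))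
    -- Lindeberg condition
    (hLind : ∀ ε : ℝ, 0 < ε → Tendsto (fun n => (1 / s n ^ 2) *
        ∑ j ∈ Finset.Icc 1 n, ∫ ω, (if ε * s n < |ξ j ω| then ξ j ω ^ 2 else 0) ∂P)
      atTop (nhds 0))
    (llo lhi : ℕ → ℝ) (Λ la lb : ℝ)
    (hllo : ∀ j, 0 ≤ llo j) (hlohi : ∀ j, llo j ≤ lhi j) (hΛ : ∀ j, lhi j ≤ Λ)
    (hla : 0 ≤ la) (hlab : la ≤ lb)
    -- stabilization condition
    (hstab : Tendsto (fun n => ∑ j ∈ Finset.range n,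
        σ (j + 1) ^ 2 / s n ^ 2 * (|lhi j ^ 2 - lb ^ 2| + |llo j ^ 2 - la ^ 2|))
      atTop (nhds 0))
    -- the function v and its partial derivatives
    (v vt vx vxx : ℝ × ℝ → ℝ)
    (hvt : ∀ x : ℝ, ∀ t ∈ Set.Icc (0:ℝ) 1,
      HasDerivWithinAt (fun r => v (r, x)) (vt (t, x)) (Set.Icc (0:ℝ) 1) t)
    (hvx : ∀ t ∈ Set.Icc (0:ℝ) 1, ∀ x : ℝ, HasDerivAt (fun y => v (t, y)) (vx (t, x)) x)
    (hvxx : ∀ t ∈ Set.Icc (0:ℝ) 1, ∀ x : ℝ, HasDerivAt (fun y => vx (t, y)) (vxx (t, x)) x)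
    (hvt_cont : ContinuousOn vt (Set.Icc (0:ℝ) 1 ×ˢ Set.univ))
    (hvxx_cont : ContinuousOn vxx (Set.Icc (0:ℝ) 1 ×ˢ Set.univ))
    (hvxx_bd : ∃ C, ∀ z : ℝ × ℝ, z.1 ∈ Set.Icc (0:ℝ) 1 → |vxx z| ≤ C)
    -- the G-heat equation on [0,1) × ℝ
    (hPDE : ∀ t ∈ Set.Ico (0:ℝ) 1, ∀ x : ℝ,
      vt (t, x) + (1 / 2) * (lb ^ 2 * max (vxx (t, x)) 0
        - la ^ 2 * max (-(vxx (t, x))) 0) = 0) :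
    Tendsto (fun n => sSup {r : ℝ | ∃ lam : ℕ → Ω → ℝ,
        (∀ j, Measurable[F j] (lam j)) ∧
        (∀ j ω, lam j ω ∈ Set.Icc (llo j) (lhi j)) ∧
        r = ∫ ω, ∑ j ∈ Finset.range n, σ (j + 1) ^ 2 / s n ^ 2 *
          (vt ((∑ k ∈ Finset.range j, σ (k + 1) ^ 2) / s n ^ 2,
              (1 / s n) * ∑ k ∈ Finset.range j, lam k ω * ξ (k + 1) ω)
            + lam j ω ^ 2 / 2 *
              vxx ((∑ k ∈ Finset.range j, σ (k + 1) ^ 2) / s n ^ 2,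
                (1 / s n) * ∑ k ∈ Finset.range j, lam k ω * ξ (k + 1) ω)) ∂P})
      atTop (nhds 0) := by
  classical
  obtain ⟨C, hC⟩ := hvxx_bd
  have hC0 : (0:ℝ) ≤ C :=
    le_trans (abs_nonneg _) (hC (0, 0) ⟨le_refl 0, zero_le_one⟩)
  set M : ℕ → ℝ := fun n => ∑ j ∈ Finset.range n,
      σ (j + 1) ^ 2 / s n ^ 2 * (|lhi j ^ 2 - lb ^ 2| + |llo j ^ 2 - la ^ 2|) with hM
  have hMnn : ∀ n, 0 ≤ M n := fun n =>
    Finset.sum_nonneg fun j _ => mul_nonneg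
      (div_nonneg (sq_nonneg _) (sq_nonneg _)) (add_nonneg (abs_nonneg _) (abs_nonneg _))
  have hBnn : ∀ n, 0 ≤ C / 2 * M n := fun n =>
    mul_nonneg (by linarith) (hMnn n)
  have hs2 : ∀ n, s n ^ 2 = ∑ j ∈ Finset.range n, σ (j + 1) ^ 2 := by
    intro n
    rw [hs]
    exact Real.sq_sqrt (Finset.sum_nonneg fun j _ => sq_nonneg _)
  have ht : ∀ n j, j < n →
      (∑ k ∈ Finset.range j, σ (k + 1) ^ 2) / s n ^ 2 ∈ Set.Ico (0:ℝ) 1 := by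
    intro n j hj
    have hpos : 0 < s n ^ 2 := by
      rw [hs2]
      exact Finset.sum_pos (fun k _ => pow_pos (hσ _) 2)
        ⟨0, Finset.mem_range.mpr (Nat.zero_lt_of_lt hj)⟩
    constructor
    · exact div_nonneg (Finset.sum_nonneg fun k _ => sq_nonneg _) hpos.le
    · rw [div_lt_one hpos, hs2]
      refine Finset.sum_lt_sum_of_subset
        (Finset.range_subset_range.mpr hj.le) (Finset.mem_range.mpr hj)
        (by simp) (pow_pos (hσ _) 2) (fun k _ _ => sq_nonneg _)
  -- Upper bound for an arbitrary admissible lam, pointwise in ω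
  have hub : ∀ n (lam : ℕ → Ω → ℝ),
      (∀ j ω, lam j ω ∈ Set.Icc (llo j) (lhi j)) → ∀ ω : Ω,
      (∑ j ∈ Finset.range n, σ (j + 1) ^ 2 / s n ^ 2 *
          (vt ((∑ k ∈ Finset.range j, σ (k + 1) ^ 2) / s n ^ 2,
              (1 / s n) * ∑ k ∈ Finset.range j, lam k ω * ξ (k + 1) ω)
            + lam j ω ^ 2 / 2 *
              vxx ((∑ k ∈ Finset.range j, σ (k + 1) ^ 2) / s n ^ 2,
                (1 / s n) * ∑ k ∈ Finset.range j, lam k ω * ξ (k + 1) ω)))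
        ≤ C / 2 * M n := by
    intro n lam hmem ω
    have step : ∀ j ∈ Finset.range n,
        σ (j + 1) ^ 2 / s n ^ 2 *
          (vt ((∑ k ∈ Finset.range j, σ (k + 1) ^ 2) / s n ^ 2,
              (1 / s n) * ∑ k ∈ Finset.range j, lam k ω * ξ (k + 1) ω)
            + lam j ω ^ 2 / 2 *
              vxx ((∑ k ∈ Finset.range j, σ (k + 1) ^ 2) / s n ^ 2,
                (1 / s n) * ∑ k ∈ Finset.range j, lam k ω * ξ (k + 1) ω))
          ≤ σ (j + 1) ^ 2 / s n ^ 2 *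
              ((|lhi j ^ 2 - lb ^ 2| + |llo j ^ 2 - la ^ 2|) * (C / 2)) := by
      intro j hj
      have hj' := Finset.mem_range.mp hj
      set t := (∑ k ∈ Finset.range j, σ (k + 1) ^ 2) / s n ^ 2 with hts
      set x := (1 / s n) * ∑ k ∈ Finset.range j, lam k ω * ξ (k + 1) ω with hxs
      have htm := ht n j hj'
      have hpde := hPDE t htm x
      have hAb : |vxx (t, x)| ≤ C := hC (t, x) ⟨htm.1, htm.2.le⟩
      have hin := key_ub hpde hAb (hllo j) (hmem j ω).1 (hmem j ω).2
      exact mul_le_mul_of_nonneg_left hin (div_nonneg (sq_nonneg _) (sq_nonneg _))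
    calc _ ≤ ∑ j ∈ Finset.range n, σ (j + 1) ^ 2 / s n ^ 2 *
            ((|lhi j ^ 2 - lb ^ 2| + |llo j ^ 2 - la ^ 2|) * (C / 2)) :=
          Finset.sum_le_sum step
      _ = C / 2 * M n := by
          rw [hM, Finset.mul_sum]
          exact Finset.sum_congr rfl fun j _ => by ring
  -- Upper bound for integrals
  have hJub : ∀ n (lam : ℕ → Ω → ℝ),
      (∀ j ω, lam j ω ∈ Set.Icc (llo j) (lhi j)) →
      (∫ ω, ∑ j ∈ Finset.range n, σ (j + 1) ^ 2 / s n ^ 2 *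
          (vt ((∑ k ∈ Finset.range j, σ (k + 1) ^ 2) / s n ^ 2,
              (1 / s n) * ∑ k ∈ Finset.range j, lam k ω * ξ (k + 1) ω)
            + lam j ω ^ 2 / 2 *
              vxx ((∑ k ∈ Finset.range j, σ (k + 1) ^ 2) / s n ^ 2,
                (1 / s n) * ∑ k ∈ Finset.range j, lam k ω * ξ (k + 1) ω)) ∂P)
        ≤ C / 2 * M n := by
    intro n lam hmem
    by_cases hi : Integrable (fun ω => ∑ j ∈ Finset.range n, σ (j + 1) ^ 2 / s n ^ 2 *
          (vt ((∑ k ∈ Finset.range j, σ (k + 1) ^ 2) / s n ^ 2,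
              (1 / s n) * ∑ k ∈ Finset.range j, lam k ω * ξ (k + 1) ω)
            + lam j ω ^ 2 / 2 *
              vxx ((∑ k ∈ Finset.range j, σ (k + 1) ^ 2) / s n ^ 2,
                (1 / s n) * ∑ k ∈ Finset.range j, lam k ω * ξ (k + 1) ω))) P
    · calc _ ≤ ∫ _ω, (C / 2 * M n) ∂P :=
            integral_mono hi (integrable_const _) (hub n lam hmem)
        _ = C / 2 * M n := by simp
    · rw [integral_undef hi]; exact hBnn n
  -- the sets are bounded above by C/2 * M n
  have hSub : ∀ n r, r ∈ {r : ℝ | ∃ lam : ℕ → Ω → ℝ,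
        (∀ j, Measurable[F j] (lam j)) ∧
        (∀ j ω, lam j ω ∈ Set.Icc (llo j) (lhi j)) ∧
        r = ∫ ω, ∑ j ∈ Finset.range n, σ (j + 1) ^ 2 / s n ^ 2 *
          (vt ((∑ k ∈ Finset.range j, σ (k + 1) ^ 2) / s n ^ 2,
              (1 / s n) * ∑ k ∈ Finset.range j, lam k ω * ξ (k + 1) ω)
            + lam j ω ^ 2 / 2 *
              vxx ((∑ k ∈ Finset.range j, σ (k + 1) ^ 2) / s n ^ 2,
                (1 / s n) * ∑ k ∈ Finset.range j, lam k ω * ξ (k + 1) ω)) ∂P} →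
      r ≤ C / 2 * M n := by
    rintro n r ⟨lam, _, hmem, rfl⟩
    exact hJub n lam hmem
  -- construct a good adapted lam for the lower bound
  have hlow : ∀ n, -(C / 2 * M n) ≤ sSup {r : ℝ | ∃ lam : ℕ → Ω → ℝ,
        (∀ j, Measurable[F j] (lam j)) ∧
        (∀ j ω, lam j ω ∈ Set.Icc (llo j) (lhi j)) ∧
        r = ∫ ω, ∑ j ∈ Finset.range n, σ (j + 1) ^ 2 / s n ^ 2 *
          (vt ((∑ k ∈ Finset.range j, σ (k + 1) ^ 2) / s n ^ 2,
              (1 / s n) * ∑ k ∈ Finset.range j, lam k ω * ξ (k + 1) ω)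
            + lam j ω ^ 2 / 2 *
              vxx ((∑ k ∈ Finset.range j, σ (k + 1) ^ 2) / s n ^ 2,
                (1 / s n) * ∑ k ∈ Finset.range j, lam k ω * ξ (k + 1) ω)) ∂P} := by
    intro n
    set pick : ℕ → ℝ → ℝ := fun j x =>
      if 0 ≤ vxx ((∑ k ∈ Finset.range j, σ (k + 1) ^ 2) / s n ^ 2, x) ∧ j < n
      then lhi j else llo j with hpick
    set lam : ℕ → Ω → ℝ := fun j ω => pick j (XXr ξ (1 / s n) pick j ω) with hlam
    have hpickm : ∀ j, Measurable (pick j) := by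
      intro j
      by_cases hj : j < n
      · have hcont : Continuous fun x : ℝ =>
            vxx ((∑ k ∈ Finset.range j, σ (k + 1) ^ 2) / s n ^ 2, x) := by
          exact continuousOn_univ.mp
            (hvxx_cont.comp ((continuous_const.prodMk continuous_id).continuousOn)
              (fun x _ => ⟨⟨(ht n j hj).1, (ht n j hj).2.le⟩, trivial⟩))
        have : pick j = fun x =>
            if 0 ≤ vxx ((∑ k ∈ Finset.range j, σ (k + 1) ^ 2) / s n ^ 2, x)
            then lhi j else llo j := by
          funext x; simp [hpick, hj]
        rw [this]
        exact Measurable.ite (measurableSet_le measurable_const hcont.measurable)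
          measurable_const measurable_const
      · have : pick j = fun _ => llo j := by funext x; simp [hpick, hj]
        rw [this]; exact measurable_const
    have hXm : ∀ j, Measurable[F j] (XXr ξ (1 / s n) pick j) := by
      intro j
      induction j with
      | zero => exact measurable_const
      | succ j ih =>
        show Measurable[F (j + 1)] fun ω =>
          XXr ξ (1 / s n) pick j ω
            + (1 / s n) * pick j (XXr ξ (1 / s n) pick j ω) * ξ (j + 1) ω
        have ih' : Measurable[F (j + 1)] (XXr ξ (1 / s n) pick j) :=
          ih.mono (F.mono (Nat.le_succ j)) le_rfl
        exact ih'.add ((measurable_const.mul ((hpickm j).comp ih')).mul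
          (hadapt (j + 1) (Nat.le_add_left 1 j)))
    have hlamm : ∀ j, Measurable[F j] (lam j) := fun j => (hpickm j).comp (hXm j)
    have hlammem : ∀ j ω, lam j ω ∈ Set.Icc (llo j) (lhi j) := by
      intro j ω
      rw [hlam]
      simp only [hpick]
      split_ifs
      · exact ⟨hlohi j, le_rfl⟩
      · exact ⟨le_rfl, hlohi j⟩
    set r := ∫ ω, ∑ j ∈ Finset.range n, σ (j + 1) ^ 2 / s n ^ 2 *
          (vt ((∑ k ∈ Finset.range j, σ (k + 1) ^ 2) / s n ^ 2,
              (1 / s n) * ∑ k ∈ Finset.range j, lam k ω * ξ (k + 1) ω)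
            + lam j ω ^ 2 / 2 *
              vxx ((∑ k ∈ Finset.range j, σ (k + 1) ^ 2) / s n ^ 2,
                (1 / s n) * ∑ k ∈ Finset.range j, lam k ω * ξ (k + 1) ω)) ∂P with hr
    have hXeq : ∀ j ω, (1 / s n) * ∑ k ∈ Finset.range j, lam k ω * ξ (k + 1) ω
        = XXr ξ (1 / s n) pick j ω := fun j ω => (XXr_eq ξ (1 / s n) pick j ω).symm
    -- pointwise lower bound
    have hptlb : ∀ ω : Ω,
        -(C / 2 * M n) ≤ ∑ j ∈ Finset.range n, σ (j + 1) ^ 2 / s n ^ 2 *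
          (vt ((∑ k ∈ Finset.range j, σ (k + 1) ^ 2) / s n ^ 2,
              (1 / s n) * ∑ k ∈ Finset.range j, lam k ω * ξ (k + 1) ω)
            + lam j ω ^ 2 / 2 *
              vxx ((∑ k ∈ Finset.range j, σ (k + 1) ^ 2) / s n ^ 2,
                (1 / s n) * ∑ k ∈ Finset.range j, lam k ω * ξ (k + 1) ω)) := by
      intro ω
      have step : ∀ j ∈ Finset.range n,
          -(σ (j + 1) ^ 2 / s n ^ 2 *
            ((|lhi j ^ 2 - lb ^ 2| + |llo j ^ 2 - la ^ 2|) * (C / 2)))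
          ≤ σ (j + 1) ^ 2 / s n ^ 2 *
            (vt ((∑ k ∈ Finset.range j, σ (k + 1) ^ 2) / s n ^ 2,
                (1 / s n) * ∑ k ∈ Finset.range j, lam k ω * ξ (k + 1) ω)
              + lam j ω ^ 2 / 2 *
                vxx ((∑ k ∈ Finset.range j, σ (k + 1) ^ 2) / s n ^ 2,
                  (1 / s n) * ∑ k ∈ Finset.range j, lam k ω * ξ (k + 1) ω)) := by
        intro j hj
        have hj' := Finset.mem_range.mp hj
        rw [hXeq j ω]
        set t := (∑ k ∈ Finset.range j, σ (k + 1) ^ 2) / s n ^ 2 with hts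
        set x := XXr ξ (1 / s n) pick j ω with hxs
        have htm := ht n j hj'
        have hpde := hPDE t htm x
        have hAb : |vxx (t, x)| ≤ C := hC (t, x) ⟨htm.1, htm.2.le⟩
        have hlamval : lam j ω = if 0 ≤ vxx (t, x) then lhi j else llo j := by
          show (if 0 ≤ vxx (t, x) ∧ j < n then lhi j else llo j) = _
          simp [hj']
        rw [hlamval]
        have hin := key_lb (l0 := llo j) (l1 := lhi j) hpde hAb
        calc -(σ (j + 1) ^ 2 / s n ^ 2 *
              ((|lhi j ^ 2 - lb ^ 2| + |llo j ^ 2 - la ^ 2|) * (C / 2)))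
            = σ (j + 1) ^ 2 / s n ^ 2 *
              (-((|lhi j ^ 2 - lb ^ 2| + |llo j ^ 2 - la ^ 2|) * (C / 2))) := by ring
          _ ≤ _ := mul_le_mul_of_nonneg_left hin
              (div_nonneg (sq_nonneg _) (sq_nonneg _))
      calc -(C / 2 * M n)
          = ∑ j ∈ Finset.range n, -(σ (j + 1) ^ 2 / s n ^ 2 *
              ((|lhi j ^ 2 - lb ^ 2| + |llo j ^ 2 - la ^ 2|) * (C / 2))) := by
            rw [hM, Finset.mul_sum, ← Finset.sum_neg_distrib]
            exact Finset.sum_congr rfl fun j _ => by ring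
        _ ≤ _ := Finset.sum_le_sum step
    have hrlb : -(C / 2 * M n) ≤ r := by
      rw [hr]
      by_cases hi : Integrable (fun ω => ∑ j ∈ Finset.range n, σ (j + 1) ^ 2 / s n ^ 2 *
          (vt ((∑ k ∈ Finset.range j, σ (k + 1) ^ 2) / s n ^ 2,
              (1 / s n) * ∑ k ∈ Finset.range j, lam k ω * ξ (k + 1) ω)
            + lam j ω ^ 2 / 2 *
              vxx ((∑ k ∈ Finset.range j, σ (k + 1) ^ 2) / s n ^ 2,
                (1 / s n) * ∑ k ∈ Finset.range j, lam k ω * ξ (k + 1) ω))) P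
      · calc -(C / 2 * M n) = ∫ _ω, -(C / 2 * M n) ∂P := by simp
          _ ≤ _ := integral_mono (integrable_const _) hi hptlb
      · rw [integral_undef hi]; linarith [hBnn n]
    refine le_trans hrlb (le_csSup ⟨C / 2 * M n, fun x hx => hSub n x hx⟩ ?_)
    exact ⟨lam, hlamm, hlammem, hr⟩
  -- squeeze
  have hup : Tendsto (fun n => C / 2 * M n) atTop (nhds 0) := by
    have := hstab.const_mul (C / 2)
    simpa [hM] using this
  refine tendsto_of_tendsto_of_tendsto_of_le_of_le (g := fun n => -(C / 2 * M n))
    (h := fun n => C / 2 * M n) (by simpa using hup.neg) hup (fun n => hlow n) ?_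
  intro n
  exact Real.sSup_le (fun r hr => hSub n r hr) (hBnn n)
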